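/- Let p ≥ 0 and δ > 0 satisfy 4δp < π, let μ₀ = (π² − 16δ²p²)/(16δ²(1+2p)), and let 0 < μ < μ₀. Then every root λ ∈ ℂ of the characteristic equation λ + 2√(p² + μ(1+2p))·e^{−λδ} = 0 satisfies Re λ < 0; that is, the equilibrium V* of the spreading model is linearly stable for μ below the Hopf bifurcation value μ₀. -/

import Mathlib

/-- Let `p ≥ 0` and `δ > 0` satisfy `4δp < π`, let
`μ₀ = (π² − 16δ²p²)/(16δ²(1+2p))`, and let `0 < μ < μ₀`.  Then every root
`λ ∈ ℂ` of the characteristic equation `λ + 2√(p² + μ(1+2p))·e^{−λδ} = 0`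
satisfies `Re λ < 0`: the equilibrium `V*` of the spreading model is linearly
stable for `μ` below the Hopf bifurcation value `μ₀`. -/
theorem spreading_linearly_stable_below_mu0 (p δ μ : ℝ) (hp : 0 ≤ p) (hδ : 0 < δ)
    (hpδ : 4 * δ * p < Real.pi) (hμ : 0 < μ)
    (hμ0 : μ < (Real.pi ^ 2 - 16 * δ ^ 2 * p ^ 2) / (16 * δ ^ 2 * (1 + 2 * p))) :
    ∀ lam : ℂ,
      lam + ((2 * Real.sqrt (p ^ 2 + μ * (1 + 2 * p)) : ℝ) : ℂ) *
          Complex.exp (-lam * (δ : ℂ)) = 0 →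
        lam.re < 0 := by
  intro lam heq
  set s : ℝ := p ^ 2 + μ * (1 + 2 * p) with hs
  have h2p : (0:ℝ) < 1 + 2 * p := by nlinarith
  have hspos : (0:ℝ) < s := by nlinarith
  have hden : (0:ℝ) < 16 * δ ^ 2 * (1 + 2 * p) := by positivity
  -- s < π²/(16δ²)
  have hslt : s < Real.pi ^ 2 / (16 * δ ^ 2) := by
    rw [lt_div_iff₀ (by positivity)]
    have := (lt_div_iff₀ hden).mp hμ0
    nlinarith
  set a : ℝ := 2 * Real.sqrt s with ha
  have hapos : 0 < a := by positivity
  -- a < π/(2δ), i.e. a*δ < π/2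
  have haδ : a * δ < Real.pi / 2 := by
    have h1 : Real.sqrt s < Real.pi / (4 * δ) := by
      have h2 : Real.pi ^ 2 / (16 * δ ^ 2) = (Real.pi / (4 * δ)) ^ 2 := by
        field_simp; ring
      have h3 := Real.sqrt_lt_sqrt hspos.le (h2 ▸ hslt)
      rwa [Real.sqrt_sq (by positivity)] at h3
    calc a * δ = 2 * δ * Real.sqrt s := by ring
    _ < 2 * δ * (Real.pi / (4 * δ)) := by
        exact mul_lt_mul_of_pos_left h1 (by positivity)
    _ = Real.pi / 2 := by field_simp; ring
  by_contra hcon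
  push_neg at hcon
  set x := lam.re with hx
  set y := lam.im with hy
  -- |lam| = a * exp(-xδ) ≤ a
  have habs : ‖lam‖ = a * Real.exp (-(x * δ)) := by
    have : lam = -(((a:ℝ):ℂ) * Complex.exp (-lam * (δ:ℂ))) := by
      linear_combination heq
    rw [this, norm_neg, norm_mul, Complex.norm_exp, Complex.norm_real, Real.norm_eq_abs,
      abs_of_pos hapos]
    congr 1
    simp [Complex.neg_re, Complex.mul_re, hx]
  have habs_le : ‖lam‖ ≤ a := by
    rw [habs]
    nlinarith [Real.exp_le_one_iff.mpr (by nlinarith : -(x*δ) ≤ 0), Real.exp_pos (-(x*δ))]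
  have hyb : |y * δ| < Real.pi / 2 := by
    have h1 : |y| ≤ a := le_trans (Complex.abs_im_le_norm lam) habs_le
    rw [abs_mul, abs_of_pos hδ]
    calc |y| * δ ≤ a * δ := by nlinarith [abs_nonneg y]
    _ < Real.pi / 2 := haδ
  have hcos : 0 < Real.cos (y * δ) := by
    apply Real.cos_pos_of_mem_Ioo
    constructor
    · linarith [abs_lt.mp hyb |>.1]
    · linarith [abs_lt.mp hyb |>.2]
  -- real part of equation
  have hre := congrArg Complex.re heq
  simp [Complex.add_re, Complex.mul_re, Complex.exp_re, Complex.exp_im,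
    Complex.neg_re, Complex.neg_im, Complex.mul_im, Complex.ofReal_re,
    Complex.ofReal_im, Real.cos_neg, Real.sin_neg] at hre
  -- hre should say x + a * (exp(-xδ) * cos(yδ)) = 0 roughly
  have hexp := Real.exp_pos (-(x*δ))
  nlinarith [mul_pos (mul_pos hapos hexp) hcos, hre, hcos]
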